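/- Let 0 < c < 1 be a constant. There exist ε > 0 (one may take ε = c/3) and n_0 such that for all n ≥ n_0 the following holds: let D be the flip distribution with p_1 = n^{−c}, p_2 = 1 − n^{−c}, and p_i = 0 for all i ∉ {1,2}. Then the expected runtime of the (1+1)-EA_D on OneMax (f = OM) is at most (1−ε)·(1/p_1)·n·ln n = (1−ε)·n^{1+c}·ln n. -/

import Mathlib

open scoped BigOperators ENNReal Classical

/-- The search space `{0,1}^n`. -/
abbrev Point (n : ℕ) := Fin n → Bool

/-- `OM x` is the number of one-bits of `x`. -/
def OM {n : ℕ} (x : Point n) : ℕ := (Finset.univ.filter fun i => x i = true).card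

/-- Hamming distance between two points. -/
def hamming {n : ℕ} (x y : Point n) : ℕ := (Finset.univ.filter fun i => x i ≠ y i).card

/-- A flip distribution `D = (p_0, …, p_n)` on `{0,…,n}`. -/
structure FlipDist (n : ℕ) where
  p : ℕ → ℝ
  nonneg : ∀ k, 0 ≤ p k
  sum_eq : ∑ k ∈ Finset.range (n+1), p k = 1
  zero_of_gt : ∀ k, n < k → p k = 0

/-- The mean `χ = Σ k·p_k` of a flip distribution. -/
noncomputable def FlipDist.mean {n : ℕ} (D : FlipDist n) : ℝ :=
  ∑ k ∈ Finset.range (n+1), (k : ℝ) * D.p k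

/-- `mutP D x y` is the probability that `mut_D(x) = y`: sample `k ∼ D`, then flip a
uniformly random set of exactly `k` positions.  Exactly one `k`-set maps `x` to `y`,
namely when `k` is the Hamming distance. -/
noncomputable def mutP {n : ℕ} (D : FlipDist n) (x y : Point n) : ℝ :=
  D.p (hamming x y) / (Nat.choose n (hamming x y) : ℝ)

/-- `x` is a global maximum of `f`. -/
def isOpt {n : ℕ} (f : Point n → ℝ) (x : Point n) : Prop := ∀ y, f y ≤ f x

/-- One-step transition probability of the elitist (1+1)-EA_D maximizing `f`. -/
noncomputable def eaStep {n : ℕ} (D : FlipDist n) (f : Point n → ℝ) (x y : Point n) : ℝ :=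
  (if f x ≤ f y then mutP D x y else 0) +
  (if y = x then ∑ z ∈ Finset.univ.filter (fun z => f z < f x), mutP D x z else 0)

/-- Distribution of the current search point `x^(t)` of the (1+1)-EA_D maximizing `f`,
with initial distribution `init`. -/
noncomputable def eaDist {n : ℕ} (D : FlipDist n) (f : Point n → ℝ)
    (init : Point n → ℝ) : ℕ → Point n → ℝ
  | 0 => init
  | t+1 => fun y => ∑ x : Point n, eaDist D f init t x * eaStep D f x y

/-- `survival D f init t = Pr[T > t]`: since the set of global maxima is absorbing for the
elitist chain, this is the probability that `x^(t)` is not a global maximum of `f`. -/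
noncomputable def survival {n : ℕ} (D : FlipDist n) (f : Point n → ℝ)
    (init : Point n → ℝ) (t : ℕ) : ℝ :=
  ∑ x ∈ Finset.univ.filter (fun x => ¬ isOpt f x), eaDist D f init t x

/-- Expected runtime `E[T] = Σ_{t≥0} Pr[T > t]` of the (1+1)-EA_D on `f`. -/
noncomputable def expRuntime {n : ℕ} (D : FlipDist n) (f : Point n → ℝ)
    (init : Point n → ℝ) : ℝ≥0∞ :=
  ∑' t : ℕ, ENNReal.ofReal (survival D f init t)

/-- The uniform initial distribution on `{0,1}^n`. -/
noncomputable def uniformInit (n : ℕ) : Point n → ℝ := fun _ => ((2:ℝ)^n)⁻¹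

/-- The linear function `f(x) = Σ w_i x_i`. -/
noncomputable def linF {n : ℕ} (w : Fin n → ℝ) : Point n → ℝ :=
  fun x => ∑ i : Fin n, w i * (if x i then 1 else 0)

namespace Stmt5Aux

variable {n : ℕ}

/-- Flip `x` on the coordinate set `S`. -/
def flipSet (x : Point n) (S : Finset (Fin n)) : Point n :=
  fun i => if i ∈ S then !x i else x i

lemma diff_flipSet (x : Point n) (S : Finset (Fin n)) :
    (Finset.univ.filter fun i => x i ≠ flipSet x S i) = S := by
  ext i
  simp only [Finset.mem_filter, Finset.mem_univ, true_and, flipSet]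
  by_cases h : i ∈ S <;> simp [h]

lemma hamming_flipSet (x : Point n) (S : Finset (Fin n)) :
    hamming x (flipSet x S) = S.card := by
  rw [hamming, diff_flipSet]

lemma flipSet_injective (x : Point n) : Function.Injective (flipSet x) := by
  intro S T h
  rw [← diff_flipSet x S, ← diff_flipSet x T, h]

lemma flipSet_surjective (x : Point n) : Function.Surjective (flipSet x) := by
  intro y
  refine ⟨Finset.univ.filter fun i => x i ≠ y i, ?_⟩
  funext i
  simp only [flipSet, Finset.mem_filter, Finset.mem_univ, true_and]
  by_cases h : x i = y i <;> simp [h] <;> cases hx : x i <;> cases hy : y i <;> simp_all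

/-- Sum over all points of a function of the Hamming distance. -/
lemma sum_hamming (x : Point n) (F : ℕ → ℝ) :
    ∑ y : Point n, F (hamming x y) = ∑ k ∈ Finset.range (n+1), (n.choose k : ℝ) * F k := by
  rw [← Function.Bijective.sum_comp ⟨flipSet_injective x, flipSet_surjective x⟩
    (fun y => F (hamming x y))]
  simp only [hamming_flipSet]
  rw [← Finset.powerset_univ, Finset.sum_powerset (Finset.univ : Finset (Fin n))
    (fun S => F S.card)]
  rw [Finset.card_univ, Fintype.card_fin]
  refine Finset.sum_congr rfl fun k hk => ?_
  rw [Finset.sum_congr rfl (fun S hS => by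
    rw [(Finset.mem_powersetCard.1 hS).2]), Finset.sum_const, Finset.card_powersetCard,
    Finset.card_univ, Fintype.card_fin, nsmul_eq_mul]

lemma mutP_nonneg (D : FlipDist n) (x y : Point n) : 0 ≤ mutP D x y := by
  apply div_nonneg (D.nonneg _) (Nat.cast_nonneg _)

lemma sum_mutP (D : FlipDist n) (x : Point n) : ∑ y : Point n, mutP D x y = 1 := by
  have := sum_hamming x (fun k => D.p k / (n.choose k : ℝ))
  rw [show (∑ y : Point n, mutP D x y) = ∑ y : Point n,
    (fun k => D.p k / (n.choose k : ℝ)) (hamming x y) from rfl, this]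
  rw [← D.sum_eq]
  refine Finset.sum_congr rfl fun k hk => ?_
  have hk' : k ≤ n := Nat.lt_succ_iff.mp (Finset.mem_range.1 hk)
  have : (n.choose k : ℝ) ≠ 0 := Nat.cast_ne_zero.2 (Nat.choose_pos hk').ne'
  field_simp


-- basic facts
lemma OM_le (x : Point n) : OM x ≤ n := by
  classical
  calc OM x ≤ (Finset.univ : Finset (Fin n)).card := Finset.card_filter_le _ _
  _ = n := by simp

lemma isOpt_iff (x : Point n) : isOpt (fun y => (OM y : ℝ)) x ↔ OM x = n := by
  constructor
  · intro h
    have h1 := h (fun _ => true)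
    have h2 : OM (fun _ : Fin n => true) = n := by simp [OM]
    have h3 := Nat.cast_le.mp h1
    have h4 := OM_le x
    omega
  · intro h y
    have := OM_le y
    exact_mod_cast Nat.cast_le.mpr (this.trans h.ge)

lemma eaStep_nonneg (D : FlipDist n) (f : Point n → ℝ) (x y : Point n) :
    0 ≤ eaStep D f x y := by
  unfold eaStep
  have h1 : (0:ℝ) ≤ if f x ≤ f y then mutP D x y else 0 := by
    split
    · exact mutP_nonneg D x y
    · exact le_rfl
  have h2 : (0:ℝ) ≤ if y = x then ∑ z ∈ Finset.univ.filter (fun z => f z < f x), mutP D x z else 0 := by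
    split
    · exact Finset.sum_nonneg fun z _ => mutP_nonneg D x z
    · exact le_refl 0
  linarith

lemma sum_eaStep (D : FlipDist n) (f : Point n → ℝ) (x : Point n) :
    ∑ y : Point n, eaStep D f x y = 1 := by
  unfold eaStep
  rw [Finset.sum_add_distrib]
  rw [Finset.sum_ite_eq' Finset.univ x
    (fun _ => ∑ z ∈ Finset.univ.filter (fun z => f z < f x), mutP D x z)]
  simp only [Finset.mem_univ, if_true]
  rw [← Finset.sum_filter]
  have : (Finset.univ.filter fun z => f z < f x) = Finset.univ.filter fun y => ¬ f x ≤ f y := by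
    ext z; simp [not_le]
  rw [this, Finset.sum_filter_add_sum_filter_not]
  exact sum_mutP D x

lemma eaDist_nonneg (D : FlipDist n) (f : Point n → ℝ) (init : Point n → ℝ)
    (hinit : ∀ x, 0 ≤ init x) : ∀ t x, 0 ≤ eaDist D f init t x := by
  intro t
  induction t with
  | zero => exact hinit
  | succ t ih =>
    intro y
    exact Finset.sum_nonneg fun x _ => mul_nonneg (ih x) (eaStep_nonneg D f x y)


lemma OM_flipSet (x : Point n) (S : Finset (Fin n)) (hS : ∀ i ∈ S, x i = false) :
    OM (flipSet x S) = OM x + S.card := by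
  classical
  have hset : (Finset.univ.filter fun i => flipSet x S i = true)
      = (Finset.univ.filter fun i => x i = true) ∪ S := by
    ext i
    simp only [Finset.mem_filter, Finset.mem_univ, true_and, Finset.mem_union, flipSet]
    by_cases h : i ∈ S
    · simp [h, hS i h]
    · simp [h]
  have hdisj : Disjoint (Finset.univ.filter fun i => x i = true) S := by
    rw [Finset.disjoint_left]
    intro i hi hiS
    simp only [Finset.mem_filter] at hi
    rw [hS i hiS] at hi
    exact Bool.false_ne_true hi.2
  rw [OM, hset, Finset.card_union_of_disjoint hdisj, OM]

lemma card_zeros (x : Point n) :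
    (Finset.univ.filter fun i => x i = false).card = n - OM x := by
  classical
  have h := Finset.card_filter_add_card_filter_not
    (s := (Finset.univ : Finset (Fin n))) (p := fun i => x i = true)
  have h2 : (Finset.univ.filter fun i => ¬ x i = true) = Finset.univ.filter fun i => x i = false := by
    ext i; simp
  rw [h2] at h
  simp only [Finset.card_univ, Fintype.card_fin] at h
  have hOM : OM x = (Finset.univ.filter fun i => x i = true).card := rfl
  omega

lemma improve_mass (D : FlipDist n) (x : Point n) :
    ((n - OM x : ℕ) : ℝ) * (D.p 1 / (n.choose 1 : ℝ))
      + (((n - OM x).choose 2 : ℕ) : ℝ) * (D.p 2 / (n.choose 2 : ℝ))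
      ≤ ∑ y ∈ Finset.univ.filter (fun y => OM x < OM y), mutP D x y := by
  classical
  set Z := Finset.univ.filter (fun i => x i = false) with hZdef
  have hZcard : Z.card = n - OM x := card_zeros x
  have hZmem : ∀ i ∈ Z, x i = false := by
    intro i hi; simpa [hZdef] using (Finset.mem_filter.1 hi).2
  set P := Z.powersetCard 1 ∪ Z.powersetCard 2 with hPdef
  have hPfacts : ∀ S ∈ P, S ⊆ Z ∧ (S.card = 1 ∨ S.card = 2) := by
    intro S hS
    rcases Finset.mem_union.1 hS with h | h
    · exact ⟨(Finset.mem_powersetCard.1 h).1, Or.inl (Finset.mem_powersetCard.1 h).2⟩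
    · exact ⟨(Finset.mem_powersetCard.1 h).1, Or.inr (Finset.mem_powersetCard.1 h).2⟩
  have himg : P.image (flipSet x) ⊆ Finset.univ.filter (fun y => OM x < OM y) := by
    intro y hy
    rcases Finset.mem_image.1 hy with ⟨S, hS, rfl⟩
    rcases hPfacts S hS with ⟨hsub, hcard⟩
    have : OM (flipSet x S) = OM x + S.card :=
      OM_flipSet x S (fun i hi => hZmem i (hsub hi))
    simp only [Finset.mem_filter, Finset.mem_univ, true_and, this]
    omega
  have hstep : ∑ y ∈ P.image (flipSet x), mutP D x y
      ≤ ∑ y ∈ Finset.univ.filter (fun y => OM x < OM y), mutP D x y :=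
    Finset.sum_le_sum_of_subset_of_nonneg himg (fun y _ _ => mutP_nonneg D x y)
  have himgsum : ∑ y ∈ P.image (flipSet x), mutP D x y
      = ∑ S ∈ P, mutP D x (flipSet x S) :=
    Finset.sum_image (fun S _ T _ h => flipSet_injective x h)
  have hdisj : Disjoint (Z.powersetCard 1) (Z.powersetCard 2) := by
    rw [Finset.disjoint_left]
    intro S h1 h2
    have := (Finset.mem_powersetCard.1 h1).2
    have := (Finset.mem_powersetCard.1 h2).2
    omega
  have hsplit : ∑ S ∈ P, mutP D x (flipSet x S)
      = ∑ S ∈ Z.powersetCard 1, mutP D x (flipSet x S)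
        + ∑ S ∈ Z.powersetCard 2, mutP D x (flipSet x S) := by
    rw [hPdef, Finset.sum_union hdisj]
  have hval : ∀ k : ℕ, ∀ S ∈ Z.powersetCard k, mutP D x (flipSet x S) = D.p k / (n.choose k : ℝ) := by
    intro k S hS
    rw [mutP, hamming_flipSet, (Finset.mem_powersetCard.1 hS).2]
  have h1 : ∑ S ∈ Z.powersetCard 1, mutP D x (flipSet x S)
      = ((n - OM x : ℕ) : ℝ) * (D.p 1 / (n.choose 1 : ℝ)) := by
    rw [Finset.sum_congr rfl (hval 1), Finset.sum_const, Finset.card_powersetCard,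
      hZcard, nsmul_eq_mul, Nat.choose_one_right]
  have h2 : ∑ S ∈ Z.powersetCard 2, mutP D x (flipSet x S)
      = (((n - OM x).choose 2 : ℕ) : ℝ) * (D.p 2 / (n.choose 2 : ℝ)) := by
    rw [Finset.sum_congr rfl (hval 2), Finset.sum_const, Finset.card_powersetCard,
      hZcard, nsmul_eq_mul]
  rw [himgsum, hsplit, h1, h2] at hstep
  exact hstep

/-- Lower bound on the improvement probability when `j` zero-bits are left. -/
noncomputable def sLB (n : ℕ) (D : FlipDist n) (j : ℕ) : ℝ :=
  (j : ℝ) * (D.p 1 / (n.choose 1 : ℝ)) + ((j.choose 2 : ℕ) : ℝ) * (D.p 2 / (n.choose 2 : ℝ))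

noncomputable def gFun (n : ℕ) (D : FlipDist n) (j : ℕ) : ℝ := (sLB n D j)⁻¹

noncomputable def hFun (n : ℕ) (D : FlipDist n) (v : ℕ) : ℝ :=
  ∑ i ∈ Finset.range (n - v), gFun n D (i+1)

section HFun
variable (D : FlipDist n)

lemma sLB_nonneg (hp2 : 0 ≤ D.p 2) (j : ℕ) : 0 ≤ sLB n D j := by
  unfold sLB
  have := D.nonneg 1
  positivity

lemma sLB_pos (hp1 : 0 < D.p 1) (hp2 : 0 ≤ D.p 2) (hn : 1 ≤ n) {j : ℕ} (hj : 1 ≤ j) :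
    0 < sLB n D j := by
  unfold sLB
  have h1 : 0 < (j : ℝ) * (D.p 1 / (n.choose 1 : ℝ)) := by
    apply mul_pos (by exact_mod_cast hj)
    apply div_pos hp1
    simp only [Nat.choose_one_right]
    exact_mod_cast hn
  have h2 : 0 ≤ ((j.choose 2 : ℕ) : ℝ) * (D.p 2 / (n.choose 2 : ℝ)) := by positivity
  linarith

lemma gFun_nonneg (hp2 : 0 ≤ D.p 2) (j : ℕ) : 0 ≤ gFun n D j :=
  inv_nonneg.2 (sLB_nonneg D hp2 j)

lemma hFun_nonneg (hp2 : 0 ≤ D.p 2) (v : ℕ) : 0 ≤ hFun n D v :=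
  Finset.sum_nonneg fun i _ => gFun_nonneg D hp2 (i+1)

lemma hFun_antitone (hp2 : 0 ≤ D.p 2) {v w : ℕ} (hvw : v ≤ w) :
    hFun n D w ≤ hFun n D v := by
  apply Finset.sum_le_sum_of_subset_of_nonneg
  · exact Finset.range_subset_range.2 (by omega)
  · intro i _ _; exact gFun_nonneg D hp2 (i+1)

lemma hFun_succ {v : ℕ} (hv : v < n) :
    hFun n D v = hFun n D (v+1) + gFun n D (n - v) := by
  unfold hFun
  have : n - v = (n - (v+1)) + 1 := by omega
  rw [this, Finset.sum_range_succ]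

lemma hFun_top : hFun n D n = 0 := by
  unfold hFun
  simp

/-- The key drift inequality. -/
lemma drift (hp1 : 0 < D.p 1) (hp2 : 0 ≤ D.p 2) (hn : 1 ≤ n) (x : Point n) :
    ∑ y : Point n, eaStep D (fun z => ((OM z : ℕ) : ℝ)) x y * hFun n D (OM y)
      ≤ hFun n D (OM x) - (if OM x = n then 0 else 1) := by
  classical
  set f : Point n → ℝ := fun z => ((OM z : ℕ) : ℝ) with hf
  set v := OM x with hv
  set R : ℝ := ∑ z ∈ Finset.univ.filter (fun z => f z < f x), mutP D x z with hR
  have expand : ∑ y : Point n, eaStep D f x y * hFun n D (OM y)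
      = (∑ y ∈ Finset.univ.filter (fun y => v ≤ OM y), mutP D x y * hFun n D (OM y))
        + R * hFun n D v := by
    unfold eaStep
    rw [show (∑ y : Point n, ((if f x ≤ f y then mutP D x y else 0) +
        (if y = x then R else 0)) * hFun n D (OM y)) =
        ∑ y : Point n, ((if f x ≤ f y then mutP D x y * hFun n D (OM y) else 0) +
        (if y = x then R * hFun n D (OM y) else 0)) from by
      refine Finset.sum_congr rfl fun y _ => ?_
      rw [add_mul]
      congr 1 <;> (split <;> simp)]
    rw [Finset.sum_add_distrib, Finset.sum_ite_eq' Finset.univ x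
      (fun y => R * hFun n D (OM y))]
    simp only [Finset.mem_univ, if_true]
    congr 1
    rw [← Finset.sum_filter]
    apply Finset.sum_congr _ (fun y _ => rfl)
    ext y
    simp only [Finset.mem_filter, Finset.mem_univ, true_and, hf]
    exact_mod_cast Iff.rfl
  have hRsum : R = ∑ z ∈ Finset.univ.filter (fun z => OM z < v), mutP D x z := by
    rw [hR]
    apply Finset.sum_congr _ (fun y _ => rfl)
    ext z
    simp only [Finset.mem_filter, Finset.mem_univ, true_and, hf]
    exact_mod_cast Iff.rfl
  by_cases hopt : v = n
  · -- optimal point: everything is zero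
    rw [expand]
    have h1 : ∀ y ∈ Finset.univ.filter (fun y => v ≤ OM y),
        mutP D x y * hFun n D (OM y) = 0 := by
      intro y hy
      have := (Finset.mem_filter.1 hy).2
      have hyn : OM y = n := le_antisymm (OM_le y) (by omega)
      rw [hyn, hFun_top, mul_zero]
    rw [Finset.sum_congr rfl h1, Finset.sum_const, smul_zero, hopt, hFun_top,
      mul_zero, if_pos rfl]
    simp
  · -- non-optimal point
    have hvlt : v < n := lt_of_le_of_ne (OM_le x) hopt
    rw [expand, if_neg hopt]
    set hv1 := hFun n D (v+1) with hhv1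
    set g := gFun n D (n - v) with hg
    set a0 : ℝ := ∑ y ∈ Finset.univ.filter (fun y => OM y = v), mutP D x y with ha0
    set ap : ℝ := ∑ y ∈ Finset.univ.filter (fun y => v < OM y), mutP D x y with hap
    -- split the acceptance sum
    have hsplit : (∑ y ∈ Finset.univ.filter (fun y => v ≤ OM y), mutP D x y * hFun n D (OM y))
        ≤ a0 * hFun n D v + ap * hv1 := by
      have e1 : Finset.univ.filter (fun y : Point n => v ≤ OM y)
          = Finset.univ.filter (fun y => OM y = v) ∪ Finset.univ.filter (fun y => v < OM y) := by
        ext y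
        simp only [Finset.mem_filter, Finset.mem_univ, true_and, Finset.mem_union]
        omega
      have e2 : Disjoint (Finset.univ.filter (fun y : Point n => OM y = v))
          (Finset.univ.filter (fun y => v < OM y)) := by
        rw [Finset.disjoint_left]
        intro y h1 h2
        simp only [Finset.mem_filter, Finset.mem_univ, true_and] at h1 h2
        omega
      rw [e1, Finset.sum_union e2]
      have b1 : (∑ y ∈ Finset.univ.filter (fun y : Point n => OM y = v),
          mutP D x y * hFun n D (OM y)) = a0 * hFun n D v := by
        rw [ha0, Finset.sum_mul]
        refine Finset.sum_congr rfl fun y hy => ?_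
        rw [(Finset.mem_filter.1 hy).2]
      have b2 : (∑ y ∈ Finset.univ.filter (fun y : Point n => v < OM y),
          mutP D x y * hFun n D (OM y)) ≤ ap * hv1 := by
        rw [hap, Finset.sum_mul]
        refine Finset.sum_le_sum fun y hy => ?_
        have := (Finset.mem_filter.1 hy).2
        exact mul_le_mul_of_nonneg_left (hFun_antitone D hp2 (by omega)) (mutP_nonneg D x y)
      linarith
    -- partition of unity
    have hpart : a0 + ap + R = 1 := by
      rw [ha0, hap, hRsum, ← sum_mutP D x]
      rw [← Finset.sum_filter_add_sum_filter_not Finset.univ (fun y : Point n => v ≤ OM y)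
        (fun y => mutP D x y)]
      have e1 : Finset.univ.filter (fun y : Point n => ¬ v ≤ OM y)
          = Finset.univ.filter (fun y => OM y < v) := by
        ext y; simp only [Finset.mem_filter, Finset.mem_univ, true_and]; omega
      have e2 : Finset.univ.filter (fun y : Point n => v ≤ OM y)
          = Finset.univ.filter (fun y => OM y = v) ∪ Finset.univ.filter (fun y => v < OM y) := by
        ext y
        simp only [Finset.mem_filter, Finset.mem_univ, true_and, Finset.mem_union]
        omega
      have e3 : Disjoint (Finset.univ.filter (fun y : Point n => OM y = v))
          (Finset.univ.filter (fun y => v < OM y)) := by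
        rw [Finset.disjoint_left]
        intro y h1 h2
        simp only [Finset.mem_filter, Finset.mem_univ, true_and] at h1 h2
        omega
      rw [e1, e2, Finset.sum_union e3]
    -- drift is at least 1
    have hone : 1 ≤ ap * g := by
      have him := improve_mass D x
      have hsl : sLB n D (n - v) ≤ ap := him
      have hslpos : 0 < sLB n D (n - v) := sLB_pos D hp1 hp2 hn (by omega)
      have hginv : g = (sLB n D (n - v))⁻¹ := rfl
      calc (1:ℝ) = sLB n D (n - v) * (sLB n D (n - v))⁻¹ := (mul_inv_cancel₀ hslpos.ne').symm
      _ ≤ ap * (sLB n D (n - v))⁻¹ :=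
        mul_le_mul_of_nonneg_right hsl (inv_nonneg.2 hslpos.le)
      _ = ap * g := by rw [hginv]
    have hveq : hFun n D v = hv1 + g := hFun_succ D hvlt
    have expand2 : a0 * hFun n D v + ap * hv1 + R * hFun n D v = hFun n D v - ap * g := by
      linear_combination (hFun n D v) * hpart - ap * hveq
    linarith
end HFun

/-- Harmonic sum bound: `∑_{i<m} 1/(i+1) ≤ 1 + log m` for `m ≥ 1`. -/
lemma harmonic_le (m : ℕ) (hm : 1 ≤ m) :
    ∑ i ∈ Finset.range m, (1 : ℝ) / (i+1) ≤ 1 + Real.log m := by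
  induction m, hm using Nat.le_induction with
  | base => simp
  | succ m hm ih =>
    rw [Finset.sum_range_succ]
    have hm0 : (0:ℝ) < m := by exact_mod_cast hm
    have hm1 : (0:ℝ) < m + 1 := by positivity
    have hlog : Real.log ((m:ℝ) / (m+1)) ≤ (m:ℝ)/(m+1) - 1 :=
      Real.log_le_sub_one_of_pos (by positivity)
    rw [Real.log_div hm0.ne' hm1.ne'] at hlog
    have hfrac : (m:ℝ)/(m+1) - 1 = -(1/((m:ℝ)+1)) := by field_simp; ring
    rw [hfrac] at hlog
    have hcast : ((m+1 : ℕ) : ℝ) = (m:ℝ) + 1 := by push_cast; ring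
    rw [hcast]
    have : (1:ℝ) / ((m:ℝ)+1) ≤ Real.log ((m:ℝ)+1) - Real.log m := by linarith
    linarith [ih]

/-- Telescoping: `∑_{i ∈ Ico m n} (F i - F (i+1)) = F m - F n`. -/
lemma telescope (F : ℕ → ℝ) {m n : ℕ} (hmn : m ≤ n) :
    ∑ i ∈ Finset.Ico m n, (F i - F (i+1)) = F m - F n := by
  rw [Finset.sum_Ico_eq_sub _ hmn, Finset.sum_range_sub' F, Finset.sum_range_sub' F]
  ring

lemma gFun_bound1 (n : ℕ) (D : FlipDist n) (c : ℝ)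
    (hp1 : D.p 1 = (n:ℝ)^(-c)) (hp2nn : 0 ≤ D.p 2) (hn2 : 2 ≤ n)
    {j : ℕ} (hj1 : 1 ≤ j) :
    gFun n D j ≤ (n:ℝ) * (n:ℝ)^c * (1/(j:ℝ)) := by
  have hN0 : (0:ℝ) < n := by exact_mod_cast (by omega : 0 < n)
  have hj0 : (0:ℝ) < j := by exact_mod_cast hj1
  have hNc : (0:ℝ) < (n:ℝ)^c := Real.rpow_pos_of_pos hN0 c
  have hfirst : (0:ℝ) < (j:ℝ) * (D.p 1 / (n.choose 1 : ℝ)) := by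
    apply mul_pos hj0
    apply div_pos (by rw [hp1]; exact Real.rpow_pos_of_pos hN0 _)
    rw [Nat.choose_one_right]
    exact_mod_cast hN0
  have hle : (j:ℝ) * (D.p 1 / (n.choose 1 : ℝ)) ≤ sLB n D j := by
    unfold sLB
    have : (0:ℝ) ≤ ((j.choose 2 : ℕ) : ℝ) * (D.p 2 / (n.choose 2 : ℝ)) := by positivity
    linarith
  have h1 : gFun n D j ≤ ((j:ℝ) * (D.p 1 / (n.choose 1 : ℝ)))⁻¹ := by
    unfold gFun
    exact inv_anti₀ hfirst hle
  refine h1.trans (le_of_eq ?_)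
  rw [hp1, Nat.choose_one_right, Real.rpow_neg hN0.le]
  rw [div_eq_mul_inv, mul_comm ((((n:ℝ))^c)⁻¹)]
  rw [mul_inv, mul_inv, inv_inv, inv_inv]
  ring

lemma gFun_bound2 (n : ℕ) (D : FlipDist n) (c : ℝ)
    (hp1nn : 0 ≤ D.p 1) (hp2half : 1/2 ≤ D.p 2) (hn2 : 2 ≤ n)
    {j : ℕ} (hj2 : 2 ≤ j) (hjn : j ≤ n) :
    gFun n D j ≤ 2*(n:ℝ)^2 * (1/((j:ℝ)-1) - 1/(j:ℝ)) := by
  have hN0 : (0:ℝ) < n := by exact_mod_cast (by omega : 0 < n)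
  have hN1 : (1:ℝ) < n := by exact_mod_cast (by omega : 1 < n)
  have hj0 : (0:ℝ) < j := by exact_mod_cast (by omega : 0 < j)
  have hj1 : (1:ℝ) < j := by exact_mod_cast (by omega : 1 < j)
  have hjN : (j:ℝ) ≤ n := by exact_mod_cast hjn
  have hkey : (j:ℝ)*((j:ℝ)-1)/(2*(n:ℝ)^2) ≤ sLB n D j := by
    unfold sLB
    have h2 : (0:ℝ) ≤ (j:ℝ) * (D.p 1 / (n.choose 1 : ℝ)) := by positivity
    have hcj : ((j.choose 2 : ℕ) : ℝ) = (j:ℝ)*((j:ℝ)-1)/2 := by rw [Nat.cast_choose_two]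
    have hcn : ((n.choose 2 : ℕ) : ℝ) = (n:ℝ)*((n:ℝ)-1)/2 := by rw [Nat.cast_choose_two]
    have hcnpos : (0:ℝ) < (n:ℝ)*((n:ℝ)-1)/2 := by nlinarith
    have hq : (0:ℝ) ≤ (j:ℝ)*((j:ℝ)-1) := by nlinarith
    have hmain : (j:ℝ)*((j:ℝ)-1)/(2*(n:ℝ)^2)
        ≤ ((j:ℝ)*((j:ℝ)-1)/2) * (D.p 2 / ((n:ℝ)*((n:ℝ)-1)/2)) := by
      have hrhs : ((j:ℝ)*((j:ℝ)-1)/2) * (D.p 2 / ((n:ℝ)*((n:ℝ)-1)/2))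
          = (j:ℝ)*((j:ℝ)-1)*(D.p 2) / ((n:ℝ)*((n:ℝ)-1)) := by
        have hnne : ((n:ℝ)) ≠ 0 := hN0.ne'
        have hn1 : ((n:ℝ)-1) ≠ 0 := by nlinarith
        field_simp
      rw [hrhs, div_le_div_iff₀ (by positivity) (by nlinarith)]
      nlinarith [mul_nonneg (mul_nonneg hq hN0.le) hN0.le,
        mul_nonneg hq hN0.le, mul_nonneg (mul_nonneg hq hN0.le) (by linarith : (0:ℝ) ≤ 2*D.p 2 - 1)]
    calc (j:ℝ)*((j:ℝ)-1)/(2*(n:ℝ)^2)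
        ≤ ((j:ℝ)*((j:ℝ)-1)/2) * (D.p 2 / ((n:ℝ)*((n:ℝ)-1)/2)) := hmain
      _ = ((j.choose 2 : ℕ) : ℝ) * (D.p 2 / (n.choose 2 : ℝ)) := by rw [hcj, hcn]
      _ ≤ _ := by linarith
  have hpos : (0:ℝ) < (j:ℝ)*((j:ℝ)-1)/(2*(n:ℝ)^2) := by
    apply div_pos (by nlinarith) (by positivity)
  have h1 : gFun n D j ≤ ((j:ℝ)*((j:ℝ)-1)/(2*(n:ℝ)^2))⁻¹ := by
    unfold gFun
    exact inv_anti₀ hpos hkey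
  refine h1.trans (le_of_eq ?_)
  have e1 : 1/((j:ℝ)-1) - 1/(j:ℝ) = 1/(((j:ℝ)-1)*(j:ℝ)) := by
    rw [div_sub_div _ _ (by linarith : (j:ℝ)-1 ≠ 0) hj0.ne']
    congr 1
    ring
  rw [e1]
  rw [inv_div]
  field_simp

lemma hFun_zero_bound (n : ℕ) (D : FlipDist n) (c : ℝ)
    (hc0 : 0 < c) (hc1 : c < 1)
    (hp1 : D.p 1 = (n:ℝ)^(-c)) (hp2 : D.p 2 = 1 - (n:ℝ)^(-c))
    (hn2 : 2 ≤ n)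
    (hB : (n:ℝ)^(-c) ≤ 1/2)
    (hC : 2*(n:ℝ)^(-(c/2)) ≤ 1)
    (hD : 2 + Real.log 2 ≤ (c/6) * Real.log n) :
    hFun n D 0 ≤ (1 - c/3) * ((n:ℝ)^c) * n * Real.log n := by
  have hN0 : (0:ℝ) < n := by exact_mod_cast (by omega : 0 < n)
  have hN1 : (1:ℝ) < n := by exact_mod_cast (by omega : 1 < n)
  have hNc : (0:ℝ) < (n:ℝ)^c := Real.rpow_pos_of_pos hN0 c
  have hp1pos : 0 < D.p 1 := by rw [hp1]; exact Real.rpow_pos_of_pos hN0 _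
  have hp2half : 1/2 ≤ D.p 2 := by rw [hp2]; linarith
  have hp2nn : 0 ≤ D.p 2 := by linarith
  set r : ℝ := (n:ℝ)^((1:ℝ)-c/2) with hrdef
  have hr1 : (1:ℝ) ≤ r := by
    rw [hrdef]
    calc (1:ℝ) = (n:ℝ)^(0:ℝ) := (Real.rpow_zero _).symm
    _ ≤ (n:ℝ)^((1:ℝ)-c/2) := Real.rpow_le_rpow_of_exponent_le hN1.le (by linarith)
  have hr0 : (0:ℝ) < r := by linarith
  set m : ℕ := ⌊r⌋₊ + 1 with hmdef
  have hm1 : 1 ≤ m := by omega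
  have hrm : r ≤ (m:ℝ) := by
    rw [hmdef]
    push_cast
    exact (Nat.lt_floor_add_one r).le
  have hm2r : (m:ℝ) ≤ 2*r := by
    rw [hmdef]
    push_cast
    have := Nat.floor_le hr0.le
    linarith
  have hmn : m ≤ n := by
    have hfl : ⌊r⌋₊ < n := by
      rw [Nat.floor_lt hr0.le, hrdef]
      calc (n:ℝ)^((1:ℝ)-c/2) < (n:ℝ)^(1:ℝ) :=
        Real.rpow_lt_rpow_of_exponent_lt hN1 (by linarith)
      _ = n := Real.rpow_one _
    omega
  have hm0 : (0:ℝ) < m := by exact_mod_cast hm1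
  -- split the sum
  have hsplit : hFun n D 0 = (∑ i ∈ Finset.range m, gFun n D (i+1))
      + ∑ i ∈ Finset.Ico m n, gFun n D (i+1) := by
    unfold hFun
    rw [Nat.sub_zero, Finset.range_eq_Ico, Finset.range_eq_Ico]
    exact (Finset.sum_Ico_consecutive (fun i => gFun n D (i+1)) (Nat.zero_le m) hmn).symm
  -- part 1
  have hpart1 : ∑ i ∈ Finset.range m, gFun n D (i+1)
      ≤ (n:ℝ) * (n:ℝ)^c * (1 + Real.log m) := by
    calc ∑ i ∈ Finset.range m, gFun n D (i+1)
        ≤ ∑ i ∈ Finset.range m, (n:ℝ) * (n:ℝ)^c * (1/((i+1:ℕ):ℝ)) := by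
          refine Finset.sum_le_sum fun i _ => ?_
          exact gFun_bound1 n D c hp1 hp2nn hn2 (by omega)
      _ = (n:ℝ) * (n:ℝ)^c * (∑ i ∈ Finset.range m, 1/((i:ℝ)+1)) := by
          rw [Finset.mul_sum]
          refine Finset.sum_congr rfl fun i _ => ?_
          push_cast
          ring
      _ ≤ (n:ℝ) * (n:ℝ)^c * (1 + Real.log m) := by
          apply mul_le_mul_of_nonneg_left (harmonic_le m hm1) (by positivity)
  -- part 2
  have hpart2 : ∑ i ∈ Finset.Ico m n, gFun n D (i+1)
      ≤ 2*(n:ℝ)^2 * (1/(m:ℝ) - 1/(n:ℝ)) := by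
    have hterm : ∀ i ∈ Finset.Ico m n, gFun n D (i+1)
        ≤ 2*(n:ℝ)^2 * ((fun k : ℕ => 1/(k:ℝ)) i - (fun k : ℕ => 1/(k:ℝ)) (i+1)) := by
      intro i hi
      rcases Finset.mem_Ico.1 hi with ⟨hi1, hi2⟩
      have := gFun_bound2 n D c hp1pos.le hp2half hn2
        (j := i+1) (by omega) (by omega)
      refine this.trans (le_of_eq ?_)
      push_cast
      ring
    calc ∑ i ∈ Finset.Ico m n, gFun n D (i+1)
        ≤ ∑ i ∈ Finset.Ico m n,
            2*(n:ℝ)^2 * ((fun k : ℕ => 1/(k:ℝ)) i - (fun k : ℕ => 1/(k:ℝ)) (i+1)) :=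
          Finset.sum_le_sum hterm
      _ = 2*(n:ℝ)^2 * (1/(m:ℝ) - 1/(n:ℝ)) := by
          rw [← Finset.mul_sum, telescope (fun k : ℕ => 1/(k:ℝ)) hmn]
  -- logarithmic bound
  set L : ℝ := Real.log n with hLdef
  have hlogm : Real.log m ≤ Real.log 2 + (1 - c/2) * L := by
    calc Real.log m ≤ Real.log (2*r) := Real.log_le_log hm0 hm2r
    _ = Real.log 2 + Real.log r := Real.log_mul (by norm_num) hr0.ne'
    _ = Real.log 2 + (1 - c/2) * L := by rw [hrdef, Real.log_rpow hN0]
  -- rpow algebra for part 2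
  have hrpow : 2*(n:ℝ)^2 * (1/r) = (n:ℝ) * (n:ℝ)^c * (2*(n:ℝ)^(-(c/2))) := by
    have e : ∀ a b : ℝ, (n:ℝ)^a * (n:ℝ)^b = (n:ℝ)^(a+b) :=
      fun a b => (Real.rpow_add hN0 a b).symm
    have e2 : ((n:ℝ))^(2:ℝ) = (n:ℝ)^(2:ℕ) := by
      rw [← Real.rpow_natCast (n:ℝ) 2]; norm_num
    calc 2*(n:ℝ)^2 * (1/r)
        = 2*((n:ℝ)^(2:ℝ) * (n:ℝ)^(-((1:ℝ)-c/2))) := by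
          rw [hrdef, one_div, ← Real.rpow_neg hN0.le, e2]
          ring
      _ = 2*((n:ℝ)^((2:ℝ) + -((1:ℝ)-c/2))) := by rw [e]
      _ = 2*((n:ℝ)^((1:ℝ) + (c + -(c/2)))) := by ring_nf
      _ = 2*((n:ℝ)^(1:ℝ) * ((n:ℝ)^c * (n:ℝ)^(-(c/2)))) := by rw [e, e]
      _ = (n:ℝ) * (n:ℝ)^c * (2*(n:ℝ)^(-(c/2))) := by rw [Real.rpow_one]; ring
  have hpart2' : 2*(n:ℝ)^2 * (1/(m:ℝ) - 1/(n:ℝ)) ≤ (n:ℝ) * (n:ℝ)^c * 1 := by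
    have h1 : 1/(m:ℝ) - 1/(n:ℝ) ≤ 1/r := by
      have : 1/(m:ℝ) ≤ 1/r := one_div_le_one_div_of_le hr0 hrm
      have : (0:ℝ) ≤ 1/(n:ℝ) := by positivity
      linarith [one_div_le_one_div_of_le hr0 hrm]
    calc 2*(n:ℝ)^2 * (1/(m:ℝ) - 1/(n:ℝ)) ≤ 2*(n:ℝ)^2 * (1/r) :=
        mul_le_mul_of_nonneg_left h1 (by positivity)
    _ = (n:ℝ) * (n:ℝ)^c * (2*(n:ℝ)^(-(c/2))) := hrpow
    _ ≤ (n:ℝ) * (n:ℝ)^c * 1 := mul_le_mul_of_nonneg_left hC (by positivity)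
  -- final assembly
  have hfinal : 1 + (Real.log 2 + (1 - c/2) * L) + 1 ≤ (1 - c/3) * L := by
    have hL0 : 0 ≤ L := by
      rw [hLdef]
      exact Real.log_nonneg hN1.le
    nlinarith
  calc hFun n D 0
      ≤ (n:ℝ) * (n:ℝ)^c * (1 + Real.log m) + 2*(n:ℝ)^2 * (1/(m:ℝ) - 1/(n:ℝ)) := by
        rw [hsplit]; exact add_le_add hpart1 hpart2
    _ ≤ (n:ℝ) * (n:ℝ)^c * (1 + (Real.log 2 + (1 - c/2) * L)) + (n:ℝ) * (n:ℝ)^c * 1 := by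
        refine add_le_add ?_ hpart2'
        exact mul_le_mul_of_nonneg_left (by linarith) (by positivity)
    _ = (n:ℝ) * (n:ℝ)^c * (1 + (Real.log 2 + (1 - c/2) * L) + 1) := by ring
    _ ≤ (n:ℝ) * (n:ℝ)^c * ((1 - c/3) * L) :=
        mul_le_mul_of_nonneg_left hfinal (by positivity)
    _ = (1 - c/3) * ((n:ℝ)^c) * n * L := by ring



noncomputable def f0 {n : ℕ} : Point n → ℝ := fun z => ((OM z : ℕ) : ℝ)

section Chain
variable (D : FlipDist n)



noncomputable def Phi (init : Point n → ℝ) (t : ℕ) : ℝ :=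
  ∑ x : Point n, eaDist D (f0) init t x * hFun n D (OM x)

lemma survival_nonneg (init : Point n → ℝ) (hinit : ∀ x, 0 ≤ init x) (t : ℕ) :
    0 ≤ survival D (f0) init t :=
  Finset.sum_nonneg fun x _ => eaDist_nonneg D _ init hinit t x

lemma Phi_nonneg (hp2 : 0 ≤ D.p 2) (init : Point n → ℝ) (hinit : ∀ x, 0 ≤ init x) (t : ℕ) :
    0 ≤ Phi D init t :=
  Finset.sum_nonneg fun x _ =>
    mul_nonneg (eaDist_nonneg D _ init hinit t x) (hFun_nonneg D hp2 (OM x))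

lemma survival_step (hp1 : 0 < D.p 1) (hp2 : 0 ≤ D.p 2) (hn : 1 ≤ n)
    (init : Point n → ℝ) (hinit : ∀ x, 0 ≤ init x) (t : ℕ) :
    survival D (f0) init t ≤ Phi D init t - Phi D init (t+1) := by
  classical
  have hd := eaDist_nonneg D (f0) init hinit
  have e1 : Phi D init (t+1)
      = ∑ x : Point n, eaDist D (f0) init t x *
          (∑ y : Point n, eaStep D (f0) x y * hFun n D (OM y)) := by
    have hrec : ∀ y : Point n, eaDist D (f0) init (t+1) y
        = ∑ x : Point n, eaDist D (f0) init t x * eaStep D (f0) x y := fun y => rfl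
    unfold Phi
    calc ∑ y : Point n, eaDist D (f0) init (t+1) y * hFun n D (OM y)
        = ∑ y : Point n, ∑ x : Point n,
            eaDist D (f0) init t x * eaStep D (f0) x y * hFun n D (OM y) := by
          refine Finset.sum_congr rfl fun y _ => ?_
          rw [hrec y, Finset.sum_mul]
      _ = ∑ x : Point n, ∑ y : Point n,
            eaDist D (f0) init t x * eaStep D (f0) x y * hFun n D (OM y) :=
          Finset.sum_comm
      _ = ∑ x : Point n, eaDist D (f0) init t x *
            (∑ y : Point n, eaStep D (f0) x y * hFun n D (OM y)) := by
          refine Finset.sum_congr rfl fun x _ => ?_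
          rw [Finset.mul_sum]
          exact Finset.sum_congr rfl fun y _ => mul_assoc _ _ _
  have e2 : Phi D init (t+1) ≤ ∑ x : Point n, eaDist D (f0) init t x *
      (hFun n D (OM x) - (if OM x = n then 0 else 1)) := by
    rw [e1]
    exact Finset.sum_le_sum fun x _ =>
      mul_le_mul_of_nonneg_left (drift D hp1 hp2 hn x) (hd t x)
  have e3 : ∑ x : Point n, eaDist D (f0) init t x *
      (hFun n D (OM x) - (if OM x = n then 0 else 1))
      = Phi D init t - survival D (f0) init t := by
    have hsurv : survival D (f0) init t
        = ∑ x : Point n, eaDist D (f0) init t x * (if OM x = n then 0 else 1) := by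
      unfold survival
      rw [Finset.sum_filter]
      refine Finset.sum_congr rfl fun x _ => ?_
      have hiff : isOpt (f0 (n := n)) x ↔ OM x = n := by unfold f0; exact isOpt_iff x
      by_cases h : OM x = n
      · rw [if_neg (not_not_intro (hiff.2 h)), if_pos h, mul_zero]
      · rw [if_pos (fun hopt => h (hiff.1 hopt)), if_neg h, mul_one]
    rw [hsurv]
    unfold Phi
    rw [← Finset.sum_sub_distrib]
    refine Finset.sum_congr rfl fun x _ => ?_
    ring
  linarith [e2, e3.symm.le, e3.le]

lemma sum_survival_le (hp1 : 0 < D.p 1) (hp2 : 0 ≤ D.p 2) (hn : 1 ≤ n)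
    (init : Point n → ℝ) (hinit : ∀ x, 0 ≤ init x) (T : ℕ) :
    ∑ t ∈ Finset.range T, survival D (f0) init t ≤ Phi D init 0 := by
  have h1 : ∑ t ∈ Finset.range T, survival D (f0) init t
      ≤ ∑ t ∈ Finset.range T, (Phi D init t - Phi D init (t+1)) :=
    Finset.sum_le_sum fun t _ => survival_step D hp1 hp2 hn init hinit t
  rw [Finset.sum_range_sub' (fun t => Phi D init t) T] at h1
  have := Phi_nonneg D hp2 init hinit T
  linarith

lemma Phi_zero_uniform (hp2 : 0 ≤ D.p 2) :
    Phi D (uniformInit n) 0 ≤ hFun n D 0 := by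
  have hcard : (Finset.univ : Finset (Point n)).card = 2^n := by
    simp [Finset.card_univ, Fintype.card_fun]
  have h1 : Phi D (uniformInit n) 0
      ≤ ∑ _x : Point n, ((2:ℝ)^n)⁻¹ * hFun n D 0 := by
    refine Finset.sum_le_sum fun x _ => ?_
    have : eaDist D (f0) (uniformInit n) 0 x = ((2:ℝ)^n)⁻¹ := rfl
    rw [this]
    exact mul_le_mul_of_nonneg_left (hFun_antitone D hp2 (Nat.zero_le _)) (by positivity)
  calc Phi D (uniformInit n) 0 ≤ ∑ _x : Point n, ((2:ℝ)^n)⁻¹ * hFun n D 0 := h1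
    _ = (2^n : ℕ) • (((2:ℝ)^n)⁻¹ * hFun n D 0) := by rw [Finset.sum_const, hcard]
    _ = hFun n D 0 := by
        rw [nsmul_eq_mul]
        push_cast
        rw [← mul_assoc, mul_inv_cancel₀ (by positivity), one_mul]

lemma expRuntime_le (hp1 : 0 < D.p 1) (hp2 : 0 ≤ D.p 2) (hn : 1 ≤ n) :
    expRuntime D (f0) (uniformInit n) ≤ ENNReal.ofReal (hFun n D 0) := by
  have hinit : ∀ x : Point n, 0 ≤ uniformInit n x := fun x => by
    unfold uniformInit; positivity
  unfold expRuntime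
  refine Summable.tsum_le_of_sum_le ENNReal.summable fun s => ?_
  obtain ⟨T, hT⟩ := Finset.exists_nat_subset_range s
  have h1 : ∑ t ∈ s, ENNReal.ofReal (survival D (f0) (uniformInit n) t)
      = ENNReal.ofReal (∑ t ∈ s, survival D (f0) (uniformInit n) t) :=
    (ENNReal.ofReal_sum_of_nonneg fun t _ =>
      survival_nonneg D (uniformInit n) hinit t).symm
  rw [h1]
  apply ENNReal.ofReal_le_ofReal
  calc ∑ t ∈ s, survival D (f0) (uniformInit n) t
      ≤ ∑ t ∈ Finset.range T, survival D (f0) (uniformInit n) t :=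
        Finset.sum_le_sum_of_subset_of_nonneg hT
          (fun t _ _ => survival_nonneg D (uniformInit n) hinit t)
    _ ≤ Phi D (uniformInit n) 0 := sum_survival_le D hp1 hp2 hn (uniformInit n) hinit T
    _ ≤ hFun n D 0 := Phi_zero_uniform D hp2

end Chain

end Stmt5Aux

open Stmt5Aux in
/-- Let `0 < c < 1`. There exist `ε > 0` and `n₀` such that for all
`n ≥ n₀`: for the flip distribution with `p₁ = n^{−c}`, `p₂ = 1 − n^{−c}` and `p_i = 0`
otherwise, the expected runtime of the (1+1)-EA_D on OneMax is at most
`(1−ε)·(1/p₁)·n·ln n`. -/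
theorem stmt5 (c : ℝ) (hc0 : 0 < c) (hc1 : c < 1) :
    ∃ ε : ℝ, 0 < ε ∧ ∃ n0 : ℕ, ∀ n : ℕ, n0 ≤ n → ∀ D : FlipDist n,
      D.p 1 = (n : ℝ) ^ (-c) →
      D.p 2 = 1 - (n : ℝ) ^ (-c) →
      (∀ k, k ≠ 1 → k ≠ 2 → D.p k = 0) →
      expRuntime D (fun x => (OM x : ℝ)) (uniformInit n)
          ≤ ENNReal.ofReal ((1 - ε) * (1 / D.p 1) * n * Real.log n) := by
  refine ⟨c/3, by linarith, ?_⟩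
  have hcast : Filter.Tendsto (fun n : ℕ => (n:ℝ)) Filter.atTop Filter.atTop :=
    tendsto_natCast_atTop_atTop
  have h2ev : ∀ᶠ n : ℕ in Filter.atTop, (n:ℝ)^(-c) ≤ 1/2 :=
    (((tendsto_rpow_neg_atTop hc0).comp hcast).eventually
      (eventually_le_nhds (by norm_num : (0:ℝ) < 1/2)))
  have h3ev : ∀ᶠ n : ℕ in Filter.atTop, 2*(n:ℝ)^(-(c/2)) ≤ 1 := by
    have ht : Filter.Tendsto (fun n : ℕ => 2*(n:ℝ)^(-(c/2))) Filter.atTop (nhds (2*0)) :=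
      (((tendsto_rpow_neg_atTop (by linarith : 0 < c/2)).comp hcast).const_mul 2)
    rw [mul_zero] at ht
    exact ht.eventually (eventually_le_nhds (by norm_num : (0:ℝ) < 1))
  have h4ev : ∀ᶠ n : ℕ in Filter.atTop, 2 + Real.log 2 ≤ (c/6) * Real.log n := by
    have ht : Filter.Tendsto (fun n : ℕ => (c/6) * Real.log n) Filter.atTop Filter.atTop :=
      (Real.tendsto_log_atTop.comp hcast).const_mul_atTop (by linarith : 0 < c/6)
    exact ht.eventually_ge_atTop _
  obtain ⟨n0, hn0⟩ := Filter.eventually_atTop.mp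
    (((Filter.eventually_ge_atTop 2).and (h2ev.and (h3ev.and h4ev))))
  refine ⟨n0, fun n hn D hD1 hD2 _ => ?_⟩
  obtain ⟨hA, hB, hC, hD⟩ := hn0 n hn
  have hN0 : (0:ℝ) < n := by exact_mod_cast (by omega : 0 < n)
  have hp1pos : 0 < D.p 1 := by rw [hD1]; exact Real.rpow_pos_of_pos hN0 _
  have hp2nn : 0 ≤ D.p 2 := by rw [hD2]; linarith
  have hrun := expRuntime_le D hp1pos hp2nn (by omega)
  have hbound := hFun_zero_bound n D c hc0 hc1 hD1 hD2 hA hB hC hD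
  have hinv : 1/D.p 1 = (n:ℝ)^c := by
    rw [hD1, one_div, Real.rpow_neg hN0.le, inv_inv]
  have hf0 : (f0 : Point n → ℝ) = fun x => (OM x : ℝ) := rfl
  calc expRuntime D (fun x => (OM x : ℝ)) (uniformInit n)
      ≤ ENNReal.ofReal (hFun n D 0) := by rw [← hf0]; exact hrun
    _ ≤ ENNReal.ofReal ((1 - c/3) * (1/D.p 1) * n * Real.log n) := by
        apply ENNReal.ofReal_le_ofReal
        rw [hinv]
        exact hbound
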